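/- Let f₀ : M₀ → ℝ^{n-k} × {0} ⊂ ℝ^{n-k+1} be a smooth immersion of a manifold M₀ whose image is disjoint from the subspace L = ℝ^{n-k-1} × {(0,0)}. Then the spun map f₁ : M₀ × S¹ → ℝ^{n-k+1}, given by rotating f₀ about L, i.e., f₁(q,t) = (f₀¹(q), ..., f₀^{n-k-1}(q), f₀^{n-k}(q) cos t, −f₀^{n-k}(q) sin t), is a smooth immersion. -/

import Mathlib

open scoped Manifold

/-- Spinning an immersion: if `f₀ = (g, h) : M₀ → ℝ^{m} × ℝ = ℝ^{m+1}` is a smooth immersion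
whose image avoids the subspace `L = ℝ^{m} × {(0,0)}` of `ℝ^{m+2}` (i.e. the last coordinate
`h` never vanishes), then the spun map
`f₁(q, t) = (g q, h q * cos t, -(h q) * sin t) : M₀ × S¹ → ℝ^{m+2}` is a smooth immersion. -/
theorem spun_immersion {d m : ℕ}
    {M₀ : Type*} [TopologicalSpace M₀] [ChartedSpace (EuclideanSpace ℝ (Fin d)) M₀]
    [IsManifold (𝓡 d) ((⊤ : ℕ∞) : WithTop ℕ∞) M₀]
    (g : M₀ → EuclideanSpace ℝ (Fin m)) (h : M₀ → ℝ)
    (hf₀ : ContMDiff (𝓡 d) 𝓘(ℝ, EuclideanSpace ℝ (Fin m) × ℝ) (⊤ : ℕ∞) (fun q => (g q, h q)))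
    (himm : ∀ q, Function.Injective
      (mfderiv (𝓡 d) 𝓘(ℝ, EuclideanSpace ℝ (Fin m) × ℝ) (fun q' => (g q', h q')) q))
    (hh : ∀ q, h q ≠ 0)
    (f₁ : M₀ × Circle → EuclideanSpace ℝ (Fin m) × ℝ × ℝ)
    (hf₁ : f₁ = fun p => (g p.1, h p.1 * (p.2 : ℂ).re, -(h p.1) * (p.2 : ℂ).im)) :
    ContMDiff ((𝓡 d).prod (𝓡 1)) 𝓘(ℝ, EuclideanSpace ℝ (Fin m) × ℝ × ℝ) (⊤ : ℕ∞) f₁ ∧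
    ∀ p : M₀ × Circle, Function.Injective
      (mfderiv ((𝓡 d).prod (𝓡 1)) 𝓘(ℝ, EuclideanSpace ℝ (Fin m) × ℝ × ℝ) f₁ p) := by
  haveI := finrank_real_complex_fact'
  subst hf₁
  have hφ : ContMDiff (𝓡 1) 𝓘(ℝ, ℂ) (⊤ : ℕ∞) (fun z : Circle => (z : ℂ)) := by
    exact contMDiff_coe_sphere (E := ℂ)
  have hg : ContMDiff (𝓡 d) 𝓘(ℝ, EuclideanSpace ℝ (Fin m)) (⊤ : ℕ∞) g :=
    (ContinuousLinearMap.fst ℝ (EuclideanSpace ℝ (Fin m)) ℝ).contMDiff.comp hf₀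
  have hh' : ContMDiff (𝓡 d) 𝓘(ℝ, ℝ) (⊤ : ℕ∞) h :=
    (ContinuousLinearMap.snd ℝ (EuclideanSpace ℝ (Fin m)) ℝ).contMDiff.comp hf₀
  have hsmooth : ContMDiff ((𝓡 d).prod (𝓡 1)) 𝓘(ℝ, EuclideanSpace ℝ (Fin m) × ℝ × ℝ) (⊤ : ℕ∞)
      (fun p : M₀ × Circle => (g p.1, h p.1 * (p.2 : ℂ).re, -(h p.1) * (p.2 : ℂ).im)) := by
    refine ContMDiff.prodMk_space (hg.comp contMDiff_fst) (ContMDiff.prodMk_space ?_ ?_)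
    · exact (hh'.comp contMDiff_fst).mul
        (Complex.reCLM.contMDiff.comp (hφ.comp contMDiff_snd))
    · exact (hh'.comp contMDiff_fst).neg.mul
        (Complex.imCLM.contMDiff.comp (hφ.comp contMDiff_snd))
  refine ⟨hsmooth, ?_⟩
  rintro ⟨q, t⟩
  have hf₀diff : MDifferentiableAt (𝓡 d) 𝓘(ℝ, EuclideanSpace ℝ (Fin m) × ℝ)
      (fun q' => (g q', h q')) q := hf₀.mdifferentiableAt (by simp)
  have hφdiff : MDifferentiableAt (𝓡 1) 𝓘(ℝ, ℂ) (fun z : Circle => (z : ℂ)) t :=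
    hφ.mdifferentiableAt (by simp)
  -- the two linear maps giving the partial derivatives
  set z : ℂ := (t : ℂ) with hz
  set A : (EuclideanSpace ℝ (Fin m) × ℝ) →L[ℝ] EuclideanSpace ℝ (Fin m) × ℝ × ℝ :=
    (ContinuousLinearMap.fst ℝ (EuclideanSpace ℝ (Fin m)) ℝ).prod
      ((z.re • ContinuousLinearMap.snd ℝ (EuclideanSpace ℝ (Fin m)) ℝ).prod
        (z.im • (-(ContinuousLinearMap.snd ℝ (EuclideanSpace ℝ (Fin m)) ℝ)))) with hA
  set B : ℂ →L[ℝ] EuclideanSpace ℝ (Fin m) × ℝ × ℝ :=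
    (0 : ℂ →L[ℝ] EuclideanSpace ℝ (Fin m)).prod
      ((h q • Complex.reCLM).prod ((-(h q)) • Complex.imCLM)) with hB
  -- partial derivative in the M₀ direction
  have hχ : HasFDerivAt (fun y : EuclideanSpace ℝ (Fin m) × ℝ => ((y.1 : EuclideanSpace ℝ (Fin m)), y.2 * z.re, -y.2 * z.im)) A ((g q, h q)) := by
    refine HasFDerivAt.prodMk ?_ (HasFDerivAt.prodMk ?_ ?_)
    · exact (ContinuousLinearMap.fst ℝ (EuclideanSpace ℝ (Fin m)) ℝ).hasFDerivAt
    · exact ((ContinuousLinearMap.snd ℝ (EuclideanSpace ℝ (Fin m)) ℝ).hasFDerivAt).mul_const z.re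
    · exact (((ContinuousLinearMap.snd ℝ (EuclideanSpace ℝ (Fin m)) ℝ).hasFDerivAt).neg).mul_const z.im
  have hψ : HasFDerivAt (fun w : ℂ => ((g q : EuclideanSpace ℝ (Fin m)), h q * w.re, -(h q) * w.im)) B (z) := by
    refine HasFDerivAt.prodMk (hasFDerivAt_const _ _) (HasFDerivAt.prodMk ?_ ?_)
    · exact (Complex.reCLM.hasFDerivAt).const_mul (h q)
    · exact (Complex.imCLM.hasFDerivAt).const_mul (-(h q))
  have hP1 : mfderiv (𝓡 d) 𝓘(ℝ, EuclideanSpace ℝ (Fin m) × ℝ × ℝ)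
      (fun q' => (g q', h q' * z.re, -(h q') * z.im)) q
      = A.comp (mfderiv (𝓡 d) 𝓘(ℝ, EuclideanSpace ℝ (Fin m) × ℝ)
          (fun q' => (g q', h q')) q) := by
    have e : (fun q' => ((g q' : EuclideanSpace ℝ (Fin m)), h q' * z.re, -(h q') * z.im))
        = (fun y : EuclideanSpace ℝ (Fin m) × ℝ => (y.1, y.2 * z.re, -y.2 * z.im))
          ∘ (fun q' => (g q', h q')) := rfl
    rw [e, mfderiv_comp q (hχ.differentiableAt.mdifferentiableAt) hf₀diff,
      (hχ.hasMFDerivAt.mfderiv)]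
    rfl
  have hP2 : mfderiv (𝓡 1) 𝓘(ℝ, EuclideanSpace ℝ (Fin m) × ℝ × ℝ)
      (fun s : Circle => ((g q : EuclideanSpace ℝ (Fin m)), h q * (s : ℂ).re, -(h q) * (s : ℂ).im)) t
      = B.comp (mfderiv (𝓡 1) 𝓘(ℝ, ℂ) (fun z : Circle => (z : ℂ)) t) := by
    have e : (fun s : Circle => ((g q : EuclideanSpace ℝ (Fin m)), h q * (s : ℂ).re, -(h q) * (s : ℂ).im))
        = (fun w : ℂ => ((g q : EuclideanSpace ℝ (Fin m)), h q * w.re, -(h q) * w.im))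
          ∘ (fun z : Circle => (z : ℂ)) := rfl
    rw [e, mfderiv_comp t (hψ.differentiableAt.mdifferentiableAt) hφdiff,
      (hψ.hasMFDerivAt.mfderiv)]
    rfl
  have happ : ∀ u : TangentSpace (𝓡 d) q × TangentSpace (𝓡 1) t,
      mfderiv ((𝓡 d).prod (𝓡 1)) 𝓘(ℝ, EuclideanSpace ℝ (Fin m) × ℝ × ℝ)
        (fun p : M₀ × Circle => (g p.1, h p.1 * (p.2 : ℂ).re, -(h p.1) * (p.2 : ℂ).im)) (q, t) u
      = A (mfderiv (𝓡 d) 𝓘(ℝ, EuclideanSpace ℝ (Fin m) × ℝ) (fun q' => (g q', h q')) q u.1)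
        + B (mfderiv (𝓡 1) 𝓘(ℝ, ℂ) (fun z : Circle => (z : ℂ)) t u.2) := by
    intro u
    erw [mfderiv_prod_eq_add_apply (hsmooth.mdifferentiableAt (by simp))]
    erw [hP1, hP2]
    rfl
  -- kernel is trivial
  have hker : ∀ u : TangentSpace (𝓡 d) q × TangentSpace (𝓡 1) t,
      mfderiv ((𝓡 d).prod (𝓡 1)) 𝓘(ℝ, EuclideanSpace ℝ (Fin m) × ℝ × ℝ)
        (fun p : M₀ × Circle => (g p.1, h p.1 * (p.2 : ℂ).re, -(h p.1) * (p.2 : ℂ).im)) (q, t) u = 0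
        → u = 0 := by
    intro u hu
    rw [happ u] at hu
    set a := mfderiv (𝓡 d) 𝓘(ℝ, EuclideanSpace ℝ (Fin m) × ℝ) (fun q' => (g q', h q')) q u.1 with ha
    set w : ℂ := mfderiv (𝓡 1) 𝓘(ℝ, ℂ) (fun z : Circle => (z : ℂ)) t u.2 with hw
    simp only [hA, hB, ContinuousLinearMap.prod_apply, ContinuousLinearMap.coe_fst',
      ContinuousLinearMap.coe_snd', ContinuousLinearMap.smul_apply, ContinuousLinearMap.neg_apply,
      ContinuousLinearMap.zero_apply, smul_eq_mul, Prod.mk_add_mk] at hu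
    erw [ContinuousLinearMap.prod_apply, ContinuousLinearMap.prod_apply] at hu
    have h1' : a.1 = 0 := by
      have h1'' : a.1 + 0 = 0 := congrArg Prod.fst hu
      simpa using h1''
    have h2 : z.re * a.2 + h q * w.re = 0 :=
      congrArg (fun v : EuclideanSpace ℝ (Fin m) × ℝ × ℝ => v.2.1) hu
    have h3 : z.im * -a.2 + -(h q) * w.im = 0 := by
      have h3' : z.im * -a.2 + -(h q) * w.im = 0 :=
        congrArg (fun v : EuclideanSpace ℝ (Fin m) × ℝ × ℝ => v.2.2) hu
      linarith
    have hw_mem : w ∈ (ℝ ∙ (z))ᗮ := by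
      rw [hz, ← range_mfderiv_coe_sphere (E := ℂ) (n := 1) t]
      exact ⟨u.2, rfl⟩
    have hinner : z.re * w.re + z.im * w.im = 0 := by
      have h4 := (Submodule.mem_orthogonal _ _).1 hw_mem z (Submodule.mem_span_singleton_self _)
      rw [Complex.inner, Complex.mul_re, Complex.conj_re, Complex.conj_im] at h4
      linarith
    have hnorm : z.re * z.re + z.im * z.im = 1 := by
      have := Circle.normSq_coe t
      rwa [Complex.normSq_apply] at this
    have hb : a.2 = 0 := by
      linear_combination z.re * h2 - z.im * h3 - h q * hinner - a.2 * hnorm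
    have hwre : w.re = 0 := by
      have : h q * w.re = 0 := by linear_combination h2 - z.re * hb - a.2 * hb + a.2 * hb
      exact (mul_eq_zero.1 this).resolve_left (hh q)
    have hwim : w.im = 0 := by
      have : h q * w.im = 0 := by linear_combination -h3 - z.im * hb
      exact (mul_eq_zero.1 this).resolve_left (hh q)
    have hweq : w = 0 := Complex.ext hwre hwim
    have ha0 : a = 0 := Prod.ext h1' hb
    have hu1 : u.1 = 0 := by
      apply himm q
      rw [map_zero, ← ha]
      exact ha0
    have hu2 : u.2 = 0 := by
      apply mfderiv_coe_sphere_injective (E := ℂ) (n := 1) t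
      exact hweq.trans (ContinuousLinearMap.map_zero
        (mfderiv (𝓡 1) 𝓘(ℝ, ℂ) (fun z : Circle => (z : ℂ)) t)).symm
    exact Prod.ext hu1 hu2
  intro x y hxy
  have := hker (x - y) (by rw [map_sub, hxy, sub_self])
  exact sub_eq_zero.1 this
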